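/- Let n, d ≥ 1, let f be an integer with 0 ≤ f < n/2, let κ ≥ 0, and let A : (ℝ^d)ⁿ → ℝ^d be an (f,κ)-robust aggregator. Let 𝓗 ⊆ {1,…,n} with |𝓗| = n − f, and for each k ∈ 𝓗 let ℓ_k : ℝ^d → ℝ be L-smooth (L > 0); set ℓ_𝓗 = (1/|𝓗|)∑_{k∈𝓗} ℓ_k and assume (1/|𝓗|)∑_{k∈𝓗}‖∇ℓ_k(w') − ∇ℓ_𝓗(w')‖² ≤ G² for all w'. Let γ > 0 and H ≥ 1 satisfy L²γ²H(H−1) ≤ 1/2, fix w ∈ ℝ^d, define for each k ∈ 𝓗 the local sequence v_{k,0} = w, v_{k,h+1} = v_{k,h} − γ∇ℓ_k(v_{k,h}), and set Δ = (1/|𝓗|)∑_{k∈𝓗}(v_{k,H} − w). Let u₁,…,u_n ∈ ℝ^d be any vectors with u_k = v_{k,H} for every k ∈ 𝓗, and let w⁺ = w + A(u₁ − w, …, u_n − w). Then ‖w⁺ − w − Δ‖² ≤ 3κH²γ²G²(1 + 8L²H(H−1)γ²) + 24κL²H³(H−1)γ⁴‖∇ℓ_𝓗(w)‖². -/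

import Mathlib

open Finset

lemma aux_norm_sum_sq {E : Type*} [NormedAddCommGroup E] {ι : Type*} (s : Finset ι) (y : ι → E) :
    ‖∑ i ∈ s, y i‖ ^ 2 ≤ (s.card : ℝ) * ∑ i ∈ s, ‖y i‖ ^ 2 := by
  calc ‖∑ i ∈ s, y i‖ ^ 2 ≤ (∑ i ∈ s, ‖y i‖) ^ 2 := by
        have h1 := norm_sum_le s y
        have h0 : (0:ℝ) ≤ ‖∑ i ∈ s, y i‖ := norm_nonneg _
        nlinarith
    _ ≤ (s.card : ℝ) * ∑ i ∈ s, ‖y i‖ ^ 2 := by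
        exact sq_sum_le_card_mul_sum_sq

lemma aux_var_min {E : Type*} [NormedAddCommGroup E] [InnerProductSpace ℝ E] {ι : Type*}
    (s : Finset ι) (hs : s.Nonempty) (x : ι → E) (c : E) :
    ∑ i ∈ s, ‖x i - (s.card : ℝ)⁻¹ • ∑ j ∈ s, x j‖ ^ 2 ≤ ∑ i ∈ s, ‖x i - c‖ ^ 2 := by
  set μ := (s.card : ℝ)⁻¹ • ∑ j ∈ s, x j with hμ
  have hc : (s.card : ℝ) ≠ 0 := Nat.cast_ne_zero.mpr (Finset.card_pos.mpr hs).ne'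
  have hzero : ∑ i ∈ s, (x i - μ) = 0 := by
    rw [Finset.sum_sub_distrib, Finset.sum_const, ← Nat.cast_smul_eq_nsmul ℝ, hμ, smul_smul,
      mul_inv_cancel₀ hc, one_smul, sub_self]
  have expand : ∀ i, ‖x i - c‖ ^ 2
      = ‖x i - μ‖ ^ 2 + 2 * (inner ℝ (x i - μ) (μ - c) : ℝ) + ‖μ - c‖ ^ 2 := by
    intro i
    have h : x i - c = (x i - μ) + (μ - c) := by abel
    rw [h, norm_add_sq_real]
  have hmid : ∑ i ∈ s, 2 * (inner ℝ (x i - μ) (μ - c) : ℝ) = 0 := by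
    rw [← Finset.mul_sum, ← sum_inner, hzero, inner_zero_left, mul_zero]
  calc ∑ i ∈ s, ‖x i - μ‖ ^ 2
      ≤ ∑ i ∈ s, ‖x i - μ‖ ^ 2 + (0 + ∑ i ∈ s, ‖μ - c‖ ^ 2) := by
        have h2 : (0:ℝ) ≤ ∑ i ∈ s, ‖μ - c‖ ^ 2 := by positivity
        linarith
    _ = ∑ i ∈ s, ‖x i - c‖ ^ 2 := by
        simp_rw [expand]
        rw [Finset.sum_add_distrib, Finset.sum_add_distrib, hmid]
        ring


/-- An aggregator `A : (ℝ^d)^n → ℝ^d` is `(f,κ)`-robust if for all inputs `x₁, …, x_n`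
and every `S ⊆ {1,…,n}` with `|S| = n - f`, writing `x̄_S` for the average over `S`,
`‖A x - x̄_S‖² ≤ (κ/|S|) ∑_{i∈S} ‖x_i - x̄_S‖²`. -/
def IsRobust (n d fq : ℕ) (κ : ℝ)
    (A : (Fin n → EuclideanSpace ℝ (Fin d)) → EuclideanSpace ℝ (Fin d)) : Prop :=
  ∀ (x : Fin n → EuclideanSpace ℝ (Fin d)) (S : Finset (Fin n)), S.card = n - fq →
    ‖A x - (S.card : ℝ)⁻¹ • ∑ i ∈ S, x i‖ ^ 2
      ≤ κ / (S.card : ℝ) * ∑ i ∈ S, ‖x i - (S.card : ℝ)⁻¹ • ∑ j ∈ S, x j‖ ^ 2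

set_option maxHeartbeats 2000000 in
/-- Aggregation error of one FedRo round: with an `(f,κ)`-robust aggregator,
`‖w⁺ - w - Δ‖² ≤ 3κH²γ²G²(1 + 8L²H(H-1)γ²) + 24κL²H³(H-1)γ⁴‖∇ℓ_𝓗(w)‖²`. -/
theorem stmt_16 (n d f : ℕ) (hn : 1 ≤ n) (hd : 1 ≤ d) (hf : 2 * f < n)
    (κ : ℝ) (hκ : 0 ≤ κ)
    (A : (Fin n → EuclideanSpace ℝ (Fin d)) → EuclideanSpace ℝ (Fin d))
    (hA : IsRobust n d f κ A)
    (𝓗 : Finset (Fin n)) (h𝓗 : 𝓗.card = n - f)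
    (ℓ : Fin n → EuclideanSpace ℝ (Fin d) → ℝ) (L G : ℝ) (hL : 0 < L)
    (hdiff : ∀ k ∈ 𝓗, Differentiable ℝ (ℓ k))
    (hsmooth : ∀ k ∈ 𝓗, ∀ w w' : EuclideanSpace ℝ (Fin d),
      ‖gradient (ℓ k) w' - gradient (ℓ k) w‖ ≤ L * ‖w' - w‖)
    (lH : EuclideanSpace ℝ (Fin d) → ℝ)
    (hlH : lH = fun w => (𝓗.card : ℝ)⁻¹ * ∑ k ∈ 𝓗, ℓ k w)
    (hhetero : ∀ w' : EuclideanSpace ℝ (Fin d),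
      (𝓗.card : ℝ)⁻¹ * ∑ k ∈ 𝓗, ‖gradient (ℓ k) w' - gradient lH w'‖ ^ 2 ≤ G ^ 2)
    (γ : ℝ) (hγ : 0 < γ) (H : ℕ) (hH : 1 ≤ H)
    (hstep : L ^ 2 * γ ^ 2 * (H : ℝ) * ((H : ℝ) - 1) ≤ 1 / 2)
    (w : EuclideanSpace ℝ (Fin d)) (v : Fin n → ℕ → EuclideanSpace ℝ (Fin d))
    (hv0 : ∀ k ∈ 𝓗, v k 0 = w)
    (hrec : ∀ k ∈ 𝓗, ∀ h : ℕ, v k (h + 1) = v k h - γ • gradient (ℓ k) (v k h))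
    (Δ : EuclideanSpace ℝ (Fin d))
    (hΔ : Δ = (𝓗.card : ℝ)⁻¹ • ∑ k ∈ 𝓗, (v k H - w))
    (u : Fin n → EuclideanSpace ℝ (Fin d)) (hu : ∀ k ∈ 𝓗, u k = v k H)
    (wplus : EuclideanSpace ℝ (Fin d)) (hwp : wplus = w + A (fun k => u k - w)) :
    ‖wplus - w - Δ‖ ^ 2
      ≤ 3 * κ * (H : ℝ) ^ 2 * γ ^ 2 * G ^ 2
          * (1 + 8 * L ^ 2 * (H : ℝ) * ((H : ℝ) - 1) * γ ^ 2)
        + 24 * κ * L ^ 2 * (H : ℝ) ^ 3 * ((H : ℝ) - 1) * γ ^ 4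
          * ‖gradient lH w‖ ^ 2 := by
  classical
  have hm : 0 < 𝓗.card := by rw [h𝓗]; omega
  have hmR : (0:ℝ) < (𝓗.card : ℝ) := by exact_mod_cast hm
  have hHR : (1:ℝ) ≤ (H:ℝ) := by exact_mod_cast hH
  have hH1 : (0:ℝ) ≤ (H:ℝ) - 1 := by linarith
  set g : EuclideanSpace ℝ (Fin d) := gradient lH w with hg
  set x : Fin n → EuclideanSpace ℝ (Fin d) := fun k => u k - w with hx
  clear_value g x
  -- closed form for the local iterates
  have hclosed : ∀ k ∈ 𝓗, ∀ h : ℕ,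
      v k h - w = -(γ • ∑ j ∈ range h, gradient (ℓ k) (v k j)) := by
    intro k hk h
    induction h with
    | zero => simp [hv0 k hk]
    | succ h ih =>
      rw [hrec k hk h, Finset.sum_range_succ, smul_add, neg_add, ← ih]
      abel
  -- heterogeneity at w
  have hBG : ∑ k ∈ 𝓗, ‖gradient (ℓ k) w - g‖ ^ 2 ≤ (𝓗.card : ℝ) * G ^ 2 := by
    have h1 := hhetero w
    rw [← hg] at h1
    have h2 : (𝓗.card : ℝ) * ((𝓗.card : ℝ)⁻¹ * ∑ k ∈ 𝓗, ‖gradient (ℓ k) w - g‖ ^ 2)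
        = ∑ k ∈ 𝓗, ‖gradient (ℓ k) w - g‖ ^ 2 := by
      field_simp
    calc ∑ k ∈ 𝓗, ‖gradient (ℓ k) w - g‖ ^ 2
        = (𝓗.card : ℝ) * ((𝓗.card : ℝ)⁻¹ * ∑ k ∈ 𝓗, ‖gradient (ℓ k) w - g‖ ^ 2) := h2.symm
      _ ≤ (𝓗.card : ℝ) * G ^ 2 := mul_le_mul_of_nonneg_left h1 hmR.le
  have hBnn : (0:ℝ) ≤ ∑ k ∈ 𝓗, ‖gradient (ℓ k) w - g‖ ^ 2 :=
    Finset.sum_nonneg fun k _ => sq_nonneg _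
  -- pointwise gradient norm bound
  have hgradsq : ∀ k ∈ 𝓗, ∀ h : ℕ, ‖gradient (ℓ k) (v k h)‖ ^ 2
      ≤ 3 * (L ^ 2 * ‖v k h - w‖ ^ 2 + ‖gradient (ℓ k) w - g‖ ^ 2 + ‖g‖ ^ 2) := by
    intro k hk h
    have t1 := hsmooth k hk w (v k h)
    have t2 : ‖gradient (ℓ k) (v k h)‖ ≤ L * ‖v k h - w‖ + ‖gradient (ℓ k) w - g‖ + ‖g‖ := by
      calc ‖gradient (ℓ k) (v k h)‖
          = ‖(gradient (ℓ k) (v k h) - gradient (ℓ k) w) + (gradient (ℓ k) w - g) + g‖ := by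
            congr 1; abel
        _ ≤ ‖(gradient (ℓ k) (v k h) - gradient (ℓ k) w) + (gradient (ℓ k) w - g)‖ + ‖g‖ :=
            norm_add_le _ _
        _ ≤ ‖gradient (ℓ k) (v k h) - gradient (ℓ k) w‖ + ‖gradient (ℓ k) w - g‖ + ‖g‖ := by
            have := norm_add_le (gradient (ℓ k) (v k h) - gradient (ℓ k) w)
              (gradient (ℓ k) w - g)
            linarith
        _ ≤ L * ‖v k h - w‖ + ‖gradient (ℓ k) w - g‖ + ‖g‖ := by linarith
    have p1 : (0:ℝ) ≤ L * ‖v k h - w‖ := mul_nonneg hL.le (norm_nonneg _)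
    have p2 : (0:ℝ) ≤ ‖gradient (ℓ k) w - g‖ := norm_nonneg _
    have p3 : (0:ℝ) ≤ ‖g‖ := norm_nonneg _
    have p4 : (0:ℝ) ≤ ‖gradient (ℓ k) (v k h)‖ := norm_nonneg _
    nlinarith [sq_nonneg (L * ‖v k h - w‖ - ‖gradient (ℓ k) w - g‖),
      sq_nonneg (L * ‖v k h - w‖ - ‖g‖), sq_nonneg (‖gradient (ℓ k) w - g‖ - ‖g‖)]
  -- drift quantities
  have hDnn : ∀ h : ℕ, (0:ℝ) ≤ ∑ k ∈ 𝓗, ‖v k h - w‖ ^ 2 :=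
    fun h => Finset.sum_nonneg fun k _ => sq_nonneg _
  set T : ℝ := ∑ h ∈ range H, ∑ k ∈ 𝓗, ‖v k h - w‖ ^ 2 with hT
  have hTnn : (0:ℝ) ≤ T := Finset.sum_nonneg fun h _ => hDnn h
  set C : ℝ := (∑ k ∈ 𝓗, ‖gradient (ℓ k) w - g‖ ^ 2) + (𝓗.card : ℝ) * ‖g‖ ^ 2 with hC
  clear_value T C
  have hCnn : (0:ℝ) ≤ C := by
    rw [hC]; positivity
  -- drift recursion
  have hdrift : ∀ h ∈ range H,
      ∑ k ∈ 𝓗, ‖v k h - w‖ ^ 2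
        ≤ 3 * γ ^ 2 * L ^ 2 * (h : ℝ) * T + 3 * γ ^ 2 * (h : ℝ) ^ 2 * C := by
    intro h hh
    have step1 : ∀ k ∈ 𝓗, ‖v k h - w‖ ^ 2
        ≤ γ ^ 2 * (h : ℝ) * ∑ j ∈ range h,
            (3 * (L ^ 2 * ‖v k j - w‖ ^ 2 + ‖gradient (ℓ k) w - g‖ ^ 2 + ‖g‖ ^ 2)) := by
      intro k hk
      have e1 : ‖v k h - w‖ ^ 2 = γ ^ 2 * ‖∑ j ∈ range h, gradient (ℓ k) (v k j)‖ ^ 2 := by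
        rw [hclosed k hk h, norm_neg, norm_smul, Real.norm_eq_abs, abs_of_pos hγ]
        ring
      have e2 := aux_norm_sum_sq (range h) (fun j => gradient (ℓ k) (v k j))
      rw [Finset.card_range] at e2
      have e3 : ∑ j ∈ range h, ‖gradient (ℓ k) (v k j)‖ ^ 2
          ≤ ∑ j ∈ range h,
              (3 * (L ^ 2 * ‖v k j - w‖ ^ 2 + ‖gradient (ℓ k) w - g‖ ^ 2 + ‖g‖ ^ 2)) :=
        Finset.sum_le_sum fun j _ => hgradsq k hk j
      have hγ2 : (0:ℝ) ≤ γ ^ 2 := sq_nonneg _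
      have hhn : (0:ℝ) ≤ (h:ℝ) := Nat.cast_nonneg _
      calc ‖v k h - w‖ ^ 2 = γ ^ 2 * ‖∑ j ∈ range h, gradient (ℓ k) (v k j)‖ ^ 2 := e1
        _ ≤ γ ^ 2 * ((h : ℝ) * ∑ j ∈ range h, ‖gradient (ℓ k) (v k j)‖ ^ 2) :=
            mul_le_mul_of_nonneg_left e2 hγ2
        _ ≤ γ ^ 2 * ((h : ℝ) * ∑ j ∈ range h,
              (3 * (L ^ 2 * ‖v k j - w‖ ^ 2 + ‖gradient (ℓ k) w - g‖ ^ 2 + ‖g‖ ^ 2))) := by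
            exact mul_le_mul_of_nonneg_left (mul_le_mul_of_nonneg_left e3 hhn) hγ2
        _ = γ ^ 2 * (h : ℝ) * ∑ j ∈ range h,
              (3 * (L ^ 2 * ‖v k j - w‖ ^ 2 + ‖gradient (ℓ k) w - g‖ ^ 2 + ‖g‖ ^ 2)) := by
            ring
    have step2 : ∑ k ∈ 𝓗, ‖v k h - w‖ ^ 2
        ≤ γ ^ 2 * (h : ℝ) * ∑ k ∈ 𝓗, ∑ j ∈ range h,
            (3 * (L ^ 2 * ‖v k j - w‖ ^ 2 + ‖gradient (ℓ k) w - g‖ ^ 2 + ‖g‖ ^ 2)) := by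
      rw [Finset.mul_sum]
      exact Finset.sum_le_sum step1
    have s1 : ∑ k ∈ 𝓗, ∑ j ∈ range h, (L ^ 2 * ‖v k j - w‖ ^ 2)
        = L ^ 2 * ∑ j ∈ range h, ∑ k ∈ 𝓗, ‖v k j - w‖ ^ 2 := by
      rw [Finset.sum_comm, Finset.mul_sum]
      exact Finset.sum_congr rfl fun j _ => (Finset.mul_sum _ _ _).symm
    have s2 : ∑ k ∈ 𝓗, ∑ j ∈ range h, ‖gradient (ℓ k) w - g‖ ^ 2
        = (h : ℝ) * ∑ k ∈ 𝓗, ‖gradient (ℓ k) w - g‖ ^ 2 := by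
      simp only [Finset.sum_const, Finset.card_range, nsmul_eq_mul]
      rw [Finset.mul_sum]
    have s3 : ∑ k ∈ 𝓗, ∑ j ∈ range h, (‖g‖ ^ 2 : ℝ)
        = (h : ℝ) * ((𝓗.card : ℝ) * ‖g‖ ^ 2) := by
      simp only [Finset.sum_const, Finset.card_range, nsmul_eq_mul]
      ring
    have swap : ∑ k ∈ 𝓗, ∑ j ∈ range h,
        (3 * (L ^ 2 * ‖v k j - w‖ ^ 2 + ‖gradient (ℓ k) w - g‖ ^ 2 + ‖g‖ ^ 2))
        = 3 * (L ^ 2 * ∑ j ∈ range h, ∑ k ∈ 𝓗, ‖v k j - w‖ ^ 2)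
          + 3 * ((h : ℝ) * ∑ k ∈ 𝓗, ‖gradient (ℓ k) w - g‖ ^ 2)
          + 3 * ((h : ℝ) * ((𝓗.card : ℝ) * ‖g‖ ^ 2)) := by
      simp only [mul_add, Finset.sum_add_distrib]
      rw [← s1, ← s2, ← s3]
      simp only [← Finset.mul_sum]
    have hsub : ∑ j ∈ range h, ∑ k ∈ 𝓗, ‖v k j - w‖ ^ 2 ≤ T := by
      rw [hT]
      apply Finset.sum_le_sum_of_subset_of_nonneg
      · exact Finset.range_subset_range.mpr (Nat.le_of_lt (Finset.mem_range.mp hh))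
      · intro i _ _; exact hDnn i
    have hγh : (0:ℝ) ≤ γ ^ 2 * (h : ℝ) := by positivity
    calc ∑ k ∈ 𝓗, ‖v k h - w‖ ^ 2
        ≤ γ ^ 2 * (h : ℝ) * (3 * (L ^ 2 * ∑ j ∈ range h, ∑ k ∈ 𝓗, ‖v k j - w‖ ^ 2)
            + 3 * ((h : ℝ) * ∑ k ∈ 𝓗, ‖gradient (ℓ k) w - g‖ ^ 2)
            + 3 * ((h : ℝ) * ((𝓗.card : ℝ) * ‖g‖ ^ 2))) := by
          rw [swap] at step2; exact step2
      _ ≤ γ ^ 2 * (h : ℝ) * (3 * (L ^ 2 * T)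
            + 3 * ((h : ℝ) * ∑ k ∈ 𝓗, ‖gradient (ℓ k) w - g‖ ^ 2)
            + 3 * ((h : ℝ) * ((𝓗.card : ℝ) * ‖g‖ ^ 2))) := by
          apply mul_le_mul_of_nonneg_left _ hγh
          have := mul_le_mul_of_nonneg_left hsub (sq_nonneg L)
          linarith
      _ = 3 * γ ^ 2 * L ^ 2 * (h : ℝ) * T + 3 * γ ^ 2 * (h : ℝ) ^ 2 * C := by
          rw [hC]; ring
  -- sum up the drift
  have hgauss : ∑ h ∈ range H, (h : ℝ) = (H : ℝ) * ((H : ℝ) - 1) / 2 := by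
    have e2 := Finset.sum_range_id_mul_two H
    have e3 : ((∑ i ∈ range H, i) * 2 : ℕ) = (H * (H - 1) : ℕ) := e2
    have e4 : (∑ i ∈ range H, (i:ℝ)) * 2 = (H:ℝ) * ((H:ℝ) - 1) := by
      calc (∑ i ∈ range H, (i:ℝ)) * 2 = (((∑ i ∈ range H, i) * 2 : ℕ) : ℝ) := by
            push_cast; ring
        _ = ((H * (H - 1) : ℕ) : ℝ) := by rw [e3]
        _ = (H:ℝ) * ((H:ℝ) - 1) := by
            push_cast [Nat.cast_sub hH]
            ring
    linarith
  have hsq : ∑ h ∈ range H, ((h : ℝ) ^ 2) ≤ (H : ℝ) ^ 2 * ((H : ℝ) - 1) := by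
    have hb : ∀ h ∈ range H, (h:ℝ) ^ 2 ≤ ((H:ℝ) - 1) ^ 2 := by
      intro h hh
      have h1 : h + 1 ≤ H := Finset.mem_range.mp hh
      have h2 : (h:ℝ) + 1 ≤ (H:ℝ) := by exact_mod_cast h1
      have h3 : (0:ℝ) ≤ (h:ℝ) := Nat.cast_nonneg _
      nlinarith
    calc ∑ h ∈ range H, ((h:ℝ) ^ 2) ≤ ∑ h ∈ range H, ((H:ℝ) - 1) ^ 2 :=
          Finset.sum_le_sum hb
      _ = (H:ℝ) * ((H:ℝ) - 1) ^ 2 := by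
          rw [Finset.sum_const, Finset.card_range, nsmul_eq_mul]
      _ ≤ (H:ℝ) ^ 2 * ((H:ℝ) - 1) := by nlinarith
  have hTsum : T ≤ 3 * γ ^ 2 * L ^ 2 * T * ((H:ℝ) * ((H:ℝ) - 1) / 2)
      + 3 * γ ^ 2 * C * ((H:ℝ) ^ 2 * ((H:ℝ) - 1)) := by
    have h1 : T ≤ ∑ h ∈ range H,
        (3 * γ ^ 2 * L ^ 2 * (h : ℝ) * T + 3 * γ ^ 2 * (h : ℝ) ^ 2 * C) := by
      conv_lhs => rw [hT]
      exact Finset.sum_le_sum hdrift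
    have h2 : ∑ h ∈ range H,
        (3 * γ ^ 2 * L ^ 2 * (h : ℝ) * T + 3 * γ ^ 2 * (h : ℝ) ^ 2 * C)
        = 3 * γ ^ 2 * L ^ 2 * T * (∑ h ∈ range H, (h:ℝ))
          + 3 * γ ^ 2 * C * (∑ h ∈ range H, ((h:ℝ) ^ 2)) := by
      rw [Finset.mul_sum, Finset.mul_sum, ← Finset.sum_add_distrib]
      exact Finset.sum_congr rfl fun h _ => by ring
    rw [h2, hgauss] at h1
    have h3 : 3 * γ ^ 2 * C * (∑ h ∈ range H, ((h:ℝ) ^ 2))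
        ≤ 3 * γ ^ 2 * C * ((H:ℝ) ^ 2 * ((H:ℝ) - 1)) := by
      apply mul_le_mul_of_nonneg_left hsq
      positivity
    linarith
  have hTbound : T ≤ 12 * γ ^ 2 * (H:ℝ) ^ 2 * ((H:ℝ) - 1) * C := by
    have key : L ^ 2 * γ ^ 2 * (H:ℝ) * ((H:ℝ) - 1) * T ≤ (1/2) * T :=
      mul_le_mul_of_nonneg_right hstep hTnn
    nlinarith [hTsum, key]
  -- final per-client bound
  set c : EuclideanSpace ℝ (Fin d) := -((γ * (H:ℝ)) • g) with hcdef
  clear_value c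
  have hfin_k : ∀ k ∈ 𝓗, ‖x k - c‖ ^ 2
      ≤ γ ^ 2 * (H:ℝ) * ∑ h ∈ range H,
          (2 * L ^ 2 * ‖v k h - w‖ ^ 2 + 2 * ‖gradient (ℓ k) w - g‖ ^ 2) := by
    intro k hk
    have e1 : x k - c = -(γ • ∑ h ∈ range H, (gradient (ℓ k) (v k h) - g)) := by
      have hxk : x k = -(γ • ∑ h ∈ range H, gradient (ℓ k) (v k h)) := by
        simp only [hx]
        rw [hu k hk]
        exact hclosed k hk H
      rw [hxk, hcdef, Finset.sum_sub_distrib, Finset.sum_const, Finset.card_range,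
        ← Nat.cast_smul_eq_nsmul ℝ, smul_sub, smul_smul]
      abel
    have e2 : ‖x k - c‖ ^ 2
        = γ ^ 2 * ‖∑ h ∈ range H, (gradient (ℓ k) (v k h) - g)‖ ^ 2 := by
      rw [e1, norm_neg, norm_smul, Real.norm_eq_abs, abs_of_pos hγ]
      ring
    have e3 := aux_norm_sum_sq (range H) (fun h => gradient (ℓ k) (v k h) - g)
    rw [Finset.card_range] at e3
    have e4 : ∀ h ∈ range H, ‖gradient (ℓ k) (v k h) - g‖ ^ 2
        ≤ 2 * L ^ 2 * ‖v k h - w‖ ^ 2 + 2 * ‖gradient (ℓ k) w - g‖ ^ 2 := by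
      intro h _
      have t1 := hsmooth k hk w (v k h)
      have t2 : ‖gradient (ℓ k) (v k h) - g‖
          ≤ L * ‖v k h - w‖ + ‖gradient (ℓ k) w - g‖ := by
        calc ‖gradient (ℓ k) (v k h) - g‖
            = ‖(gradient (ℓ k) (v k h) - gradient (ℓ k) w) + (gradient (ℓ k) w - g)‖ := by
              congr 1; abel
          _ ≤ ‖gradient (ℓ k) (v k h) - gradient (ℓ k) w‖ + ‖gradient (ℓ k) w - g‖ :=
              norm_add_le _ _
          _ ≤ L * ‖v k h - w‖ + ‖gradient (ℓ k) w - g‖ := by linarith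
      have p1 : (0:ℝ) ≤ L * ‖v k h - w‖ := mul_nonneg hL.le (norm_nonneg _)
      have p2 : (0:ℝ) ≤ ‖gradient (ℓ k) w - g‖ := norm_nonneg _
      have p3 : (0:ℝ) ≤ ‖gradient (ℓ k) (v k h) - g‖ := norm_nonneg _
      nlinarith [sq_nonneg (L * ‖v k h - w‖ - ‖gradient (ℓ k) w - g‖)]
    calc ‖x k - c‖ ^ 2
        = γ ^ 2 * ‖∑ h ∈ range H, (gradient (ℓ k) (v k h) - g)‖ ^ 2 := e2
      _ ≤ γ ^ 2 * ((H:ℝ) * ∑ h ∈ range H, ‖gradient (ℓ k) (v k h) - g‖ ^ 2) :=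
          mul_le_mul_of_nonneg_left e3 (sq_nonneg _)
      _ ≤ γ ^ 2 * ((H:ℝ) * ∑ h ∈ range H,
            (2 * L ^ 2 * ‖v k h - w‖ ^ 2 + 2 * ‖gradient (ℓ k) w - g‖ ^ 2)) := by
          exact mul_le_mul_of_nonneg_left
            (mul_le_mul_of_nonneg_left (Finset.sum_le_sum e4) (Nat.cast_nonneg H))
            (sq_nonneg _)
      _ = γ ^ 2 * (H:ℝ) * ∑ h ∈ range H,
            (2 * L ^ 2 * ‖v k h - w‖ ^ 2 + 2 * ‖gradient (ℓ k) w - g‖ ^ 2) := by ring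
  have hsum : ∑ k ∈ 𝓗, ‖x k - c‖ ^ 2
      ≤ γ ^ 2 * (H:ℝ) * (2 * L ^ 2 * T
          + 2 * (H:ℝ) * ∑ k ∈ 𝓗, ‖gradient (ℓ k) w - g‖ ^ 2) := by
    have h1 : ∑ k ∈ 𝓗, ‖x k - c‖ ^ 2
        ≤ ∑ k ∈ 𝓗, (γ ^ 2 * (H:ℝ) * ∑ h ∈ range H,
            (2 * L ^ 2 * ‖v k h - w‖ ^ 2 + 2 * ‖gradient (ℓ k) w - g‖ ^ 2)) :=
      Finset.sum_le_sum hfin_k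
    have h2 : ∑ k ∈ 𝓗, (γ ^ 2 * (H:ℝ) * ∑ h ∈ range H,
          (2 * L ^ 2 * ‖v k h - w‖ ^ 2 + 2 * ‖gradient (ℓ k) w - g‖ ^ 2))
        = γ ^ 2 * (H:ℝ) * (2 * L ^ 2 * T
            + 2 * (H:ℝ) * ∑ k ∈ 𝓗, ‖gradient (ℓ k) w - g‖ ^ 2) := by
      rw [← Finset.mul_sum]
      congr 1
      simp only [Finset.sum_add_distrib]
      have u1 : ∑ k ∈ 𝓗, ∑ h ∈ range H, (2 * L ^ 2 * ‖v k h - w‖ ^ 2)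
          = 2 * L ^ 2 * T := by
        rw [hT, Finset.sum_comm, Finset.mul_sum]
        exact Finset.sum_congr rfl fun h _ => (Finset.mul_sum _ _ _).symm
      have u2 : ∑ k ∈ 𝓗, ∑ h ∈ range H, (2 * ‖gradient (ℓ k) w - g‖ ^ 2)
          = 2 * (H:ℝ) * ∑ k ∈ 𝓗, ‖gradient (ℓ k) w - g‖ ^ 2 := by
        simp only [Finset.sum_const, Finset.card_range, nsmul_eq_mul]
        rw [mul_assoc, Finset.mul_sum, Finset.mul_sum]
        exact Finset.sum_congr rfl fun k _ => by ring
      rw [u1, u2]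
    rw [h2] at h1
    exact h1
  -- assemble
  have hmean : Δ = (𝓗.card : ℝ)⁻¹ • ∑ i ∈ 𝓗, x i := by
    rw [hΔ]
    congr 1
    refine Finset.sum_congr rfl fun k hk => ?_
    simp only [hx]
    rw [hu k hk]
  have hkey : wplus - w - Δ = A x - (𝓗.card : ℝ)⁻¹ • ∑ i ∈ 𝓗, x i := by
    rw [hwp, hmean]; abel
  have hrob := hA x 𝓗 h𝓗
  have hκm : (0:ℝ) ≤ κ / (𝓗.card : ℝ) := div_nonneg hκ hmR.le
  have hvar := aux_var_min 𝓗 (Finset.card_pos.mp hm) x c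
  rw [hkey]
  calc ‖A x - (𝓗.card : ℝ)⁻¹ • ∑ i ∈ 𝓗, x i‖ ^ 2
      ≤ κ / (𝓗.card : ℝ) * ∑ i ∈ 𝓗, ‖x i - (𝓗.card : ℝ)⁻¹ • ∑ j ∈ 𝓗, x j‖ ^ 2 := hrob
    _ ≤ κ / (𝓗.card : ℝ) * ∑ i ∈ 𝓗, ‖x i - c‖ ^ 2 :=
        mul_le_mul_of_nonneg_left hvar hκm
    _ ≤ κ / (𝓗.card : ℝ) * (γ ^ 2 * (H:ℝ) * (2 * L ^ 2 * T
          + 2 * (H:ℝ) * ∑ k ∈ 𝓗, ‖gradient (ℓ k) w - g‖ ^ 2)) :=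
        mul_le_mul_of_nonneg_left hsum hκm
    _ ≤ κ / (𝓗.card : ℝ) * (γ ^ 2 * (H:ℝ)
          * (2 * L ^ 2 * (12 * γ ^ 2 * (H:ℝ) ^ 2 * ((H:ℝ) - 1)
              * (((𝓗.card : ℝ) * G ^ 2) + (𝓗.card : ℝ) * ‖g‖ ^ 2))
            + 2 * (H:ℝ) * ((𝓗.card : ℝ) * G ^ 2))) := by
        apply mul_le_mul_of_nonneg_left _ hκm
        have hγH : (0:ℝ) ≤ γ ^ 2 * (H:ℝ) := by positivity
        apply mul_le_mul_of_nonneg_left _ hγH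
        apply add_le_add
        · apply mul_le_mul_of_nonneg_left _ (by positivity : (0:ℝ) ≤ 2 * L ^ 2)
          have hC' : C ≤ ((𝓗.card : ℝ) * G ^ 2) + (𝓗.card : ℝ) * ‖g‖ ^ 2 := by
            rw [hC]; linarith
          have h12 : (0:ℝ) ≤ 12 * γ ^ 2 * (H:ℝ) ^ 2 * ((H:ℝ) - 1) :=
            mul_nonneg (by positivity) hH1
          calc T ≤ 12 * γ ^ 2 * (H:ℝ) ^ 2 * ((H:ℝ) - 1) * C := hTbound
            _ ≤ 12 * γ ^ 2 * (H:ℝ) ^ 2 * ((H:ℝ) - 1)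
                * (((𝓗.card : ℝ) * G ^ 2) + (𝓗.card : ℝ) * ‖g‖ ^ 2) :=
              mul_le_mul_of_nonneg_left hC' h12
        · exact mul_le_mul_of_nonneg_left hBG (by positivity : (0:ℝ) ≤ 2 * (H:ℝ))
    _ = κ * (γ ^ 2 * (H:ℝ) * (24 * L ^ 2 * γ ^ 2 * (H:ℝ) ^ 2 * ((H:ℝ) - 1)
          * (G ^ 2 + ‖g‖ ^ 2) + 2 * (H:ℝ) * G ^ 2)) := by
        field_simp
        ring
    _ ≤ 3 * κ * (H : ℝ) ^ 2 * γ ^ 2 * G ^ 2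
          * (1 + 8 * L ^ 2 * (H : ℝ) * ((H : ℝ) - 1) * γ ^ 2)
        + 24 * κ * L ^ 2 * (H : ℝ) ^ 3 * ((H : ℝ) - 1) * γ ^ 4 * ‖g‖ ^ 2 := by
        nlinarith [mul_nonneg (mul_nonneg (mul_nonneg hκ (sq_nonneg γ))
          (sq_nonneg (H:ℝ))) (sq_nonneg G)]
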